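/- arXiv:1901.08606 — 2 statements merged into one kernel-verified Lean document; each statement's English description precedes it below -/
import Mathlib

section
/- For every j ∈ [n−1] and every t ≥ 0, exp(−t · e^{(p)}_{(j,j)}) = I + ((e^{−t(1 + r_j)} − 1)/(1 + r_j)) · e^{(p)}_{(j,j)}, and this matrix belongs to ⟨p⟩^+. -/
open Matrix

/-- The ratio `r_j := p_j / p_n` for `j ∈ [n-1]`, with the state space `[n]` modeled as
`Fin (m+1)`, the last state `n` as `Fin.last m`, and `[n-1]` as `Fin m` via `Fin.castSucc`. -/
noncomputable def r (m : ℕ) (p : Fin (m + 1) → ℝ) (j : Fin m) : ℝ :=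
  p j.castSucc / p (Fin.last m)

/-- `e^{(p)}_{(j,k)} := (e_j − r_j e_n)(e_k^T − e_n^T)` as an `(m+1) × (m+1)` real matrix. -/
noncomputable def Ep (m : ℕ) (p : Fin (m + 1) → ℝ) (j k : Fin m) :
    Matrix (Fin (m + 1)) (Fin (m + 1)) ℝ :=
  Matrix.vecMulVec
    (fun a => (if a = j.castSucc then (1 : ℝ) else 0) -
      r m p j * (if a = Fin.last m then (1 : ℝ) else 0))
    (fun b => (if b = k.castSucc then (1 : ℝ) else 0) - (if b = Fin.last m then (1 : ℝ) else 0))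

open NormedSpace in
/-- Exponential of a scalar multiple of an idempotent element. -/
lemma exp_smul_of_idem {𝔸 : Type*} [NormedRing 𝔸] [NormedAlgebra ℝ 𝔸] [CompleteSpace 𝔸]
    (P : 𝔸) (hP : P * P = P) (s : ℝ) :
    exp (s • P) = 1 + (Real.exp s - 1) • P := by
  have hpow : ∀ n : ℕ, P ^ (n + 1) = P := by
    intro n; induction n with
    | zero => simp
    | succ k ih => rw [pow_succ, ih, hP]
  have hsum0 : Summable fun n : ℕ => (n.factorial⁻¹ : ℝ) • (s • P) ^ n :=
    expSeries_summable' (𝕂 := ℝ) (s • P)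
  have hc : Summable fun n : ℕ => (n.factorial⁻¹ : ℝ) * s ^ n := by
    simpa [smul_eq_mul] using expSeries_summable' (𝕂 := ℝ) s
  have hre : Real.exp s = 1 + ∑' n : ℕ, (((n+1).factorial)⁻¹ : ℝ) * s ^ (n+1) := by
    rw [Real.exp_eq_exp_ℝ, exp_eq_tsum ℝ]
    simp only [smul_eq_mul]
    rw [Summable.tsum_eq_zero_add hc]
    simp
  have h1 : ∀ n : ℕ, (((n+1).factorial)⁻¹ : ℝ) • (s • P) ^ (n+1)
      = ((((n+1).factorial)⁻¹ : ℝ) * s ^ (n+1)) • P := by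
    intro n; rw [smul_pow, hpow, smul_smul]
  have hc' : Summable fun n : ℕ => (((n+1).factorial)⁻¹ : ℝ) * s ^ (n+1) :=
    hc.comp_injective (add_left_injective 1)
  rw [exp_eq_tsum ℝ]
  beta_reduce
  rw [Summable.tsum_eq_zero_add hsum0]
  simp only [h1]
  rw [Summable.tsum_smul_const hc', hre]
  simp [sub_smul, add_smul]

lemma vmv_mul {N : ℕ} (u v w x : Fin N → ℝ) :
    Matrix.vecMulVec u v * Matrix.vecMulVec w x = (v ⬝ᵥ w) • Matrix.vecMulVec u x := by
  ext a b
  simp only [Matrix.mul_apply, Matrix.vecMulVec_apply, Matrix.smul_apply, smul_eq_mul,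
    dotProduct, Finset.sum_mul]
  apply Finset.sum_congr rfl; intros; ring

open NormedSpace in
/-- for `t ≥ 0`,
`exp(−t e^{(p)}_{(j,j)}) = I + ((e^{−t(1+r_j)} − 1)/(1+r_j)) e^{(p)}_{(j,j)}` and this
matrix lies in `⟨p⟩⁺`. -/
theorem stmt9 (m : ℕ) (hm : 1 ≤ m) (p : Fin (m + 1) → ℝ)
    (hp : ∀ a, 0 < p a) (hsum : ∑ a, p a = 1) (j : Fin m) (t : ℝ) (ht : 0 ≤ t) :
    exp (-(t • Ep m p j j)) =
      (1 : Matrix (Fin (m + 1)) (Fin (m + 1)) ℝ) +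
        ((Real.exp (-(t * (1 + r m p j))) - 1) / (1 + r m p j)) • Ep m p j j ∧
    (∀ a b, 0 ≤ exp (-(t • Ep m p j j)) a b) ∧
    (exp (-(t • Ep m p j j))).mulVec (fun _ => (1 : ℝ)) = (fun _ => (1 : ℝ)) ∧
    Matrix.vecMul p (exp (-(t • Ep m p j j))) = p := by
  have hpn : (0:ℝ) < p (Fin.last m) := hp _
  have hR : 0 < r m p j := div_pos (hp _) hpn
  set R := r m p j with hRdef
  have h1r : (0:ℝ) < 1 + R := by linarith
  have hne : j.castSucc ≠ Fin.last m := (Fin.castSucc_lt_last j).ne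
  set E := Ep m p j j with hEdef
  -- E * E = (1 + R) • E
  have hdot :
      (fun b => (if b = j.castSucc then (1:ℝ) else 0) - (if b = Fin.last m then 1 else 0)) ⬝ᵥ
      (fun a => (if a = j.castSucc then (1:ℝ) else 0) - R * (if a = Fin.last m then 1 else 0))
        = 1 + R := by
    simp [dotProduct, sub_mul, mul_sub, Finset.sum_sub_distrib, ite_mul, mul_ite,
      hne, hne.symm]
  have hEE : E * E = (1 + R) • E := by
    rw [hEdef, Ep, vmv_mul, hdot]
  have hP : ((1+R)⁻¹ • E) * ((1+R)⁻¹ • E) = (1+R)⁻¹ • E := by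
    rw [smul_mul_assoc, mul_smul_comm, hEE, smul_smul, smul_smul]
    congr 1
    field_simp
  set f : ℝ := (Real.exp (-(t * (1 + R))) - 1) / (1 + R) with hfdef
  have hmain : exp (-(t • E)) = 1 + f • E := by
    letI : SeminormedRing (Matrix (Fin (m+1)) (Fin (m+1)) ℝ) := Matrix.linftyOpSemiNormedRing
    letI : NormedRing (Matrix (Fin (m+1)) (Fin (m+1)) ℝ) := Matrix.linftyOpNormedRing
    letI : NormedAlgebra ℝ (Matrix (Fin (m+1)) (Fin (m+1)) ℝ) := Matrix.linftyOpNormedAlgebra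
    have hexp := exp_smul_of_idem ((1+R)⁻¹ • E) hP (-(t*(1+R)))
    have hsm : (-(t*(1+R))) • ((1+R)⁻¹ • E) = -(t • E) := by
      rw [smul_smul, ← neg_smul]
      congr 1
      field_simp
    have hfe : (Real.exp (-(t*(1+R))) - 1) • ((1+R)⁻¹ • E) = f • E := by
      rw [smul_smul, hfdef, div_eq_mul_inv]
    rw [hsm, hfe] at hexp
    exact hexp
  -- bounds on f
  have hex1 : Real.exp (-(t * (1 + R))) ≤ 1 := by
    rw [Real.exp_le_one_iff]
    nlinarith
  have hex0 : (0:ℝ) < Real.exp (-(t * (1 + R))) := Real.exp_pos _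
  have hf0 : f ≤ 0 := by
    rw [hfdef]
    apply div_nonpos_of_nonpos_of_nonneg <;> linarith
  have hkey : -1 ≤ f * (1 + R) := by
    rw [hfdef, div_mul_cancel₀ _ h1r.ne']
    linarith
  have h1f : 0 ≤ 1 + f := by nlinarith
  have h1fr : 0 ≤ 1 + f * R := by nlinarith
  refine ⟨hmain, ?_, ?_, ?_⟩
  · intro a b
    rw [hmain]
    simp only [Matrix.add_apply, Matrix.smul_apply, smul_eq_mul, hEdef, Ep,
      Matrix.vecMulVec_apply]
    by_cases haj : a = j.castSucc
    · subst haj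
      by_cases hbj : b = j.castSucc
      · subst hbj
        simp [Matrix.one_apply, hne, ← hRdef]
        linarith
      · by_cases hbn : b = Fin.last m
        · subst hbn
          simp [Matrix.one_apply, hne, hbj, ← hRdef]
          linarith
        · have hab : j.castSucc ≠ b := fun h => hbj h.symm
          simp [Matrix.one_apply_ne hab, if_neg hbj, if_neg hbn, if_neg hne]
    · by_cases han : a = Fin.last m
      · subst han
        by_cases hbj : b = j.castSucc
        · subst hbj
          have h' : Fin.last m ≠ j.castSucc := hne.symm
          simp [Matrix.one_apply, h', hne, ← hRdef]
          nlinarith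
        · by_cases hbn : b = Fin.last m
          · subst hbn
            have h' : Fin.last m ≠ j.castSucc := hne.symm
            simp [Matrix.one_apply, h', ← hRdef]
            linarith
          · have hab : Fin.last m ≠ b := fun h => hbn h.symm
            simp [Matrix.one_apply_ne hab, if_neg hbj, if_neg hbn, hne.symm]
      · have h0 : ((if a = j.castSucc then (1:ℝ) else 0) -
            R * (if a = Fin.last m then 1 else 0)) = 0 := by
          simp [if_neg haj, if_neg han]
        rw [h0, zero_mul, mul_zero, add_zero]
        rcases eq_or_ne a b with rfl | hab
        · simp
        · simp [Matrix.one_apply_ne hab]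
  · have hE1 : E.mulVec (fun _ => (1:ℝ)) = 0 := by
      ext a
      simp [hEdef, Ep, Matrix.mulVec, dotProduct, Matrix.vecMulVec_apply, mul_sub,
        sub_mul, Finset.sum_sub_distrib, ite_mul, mul_ite]
    rw [hmain, Matrix.add_mulVec, Matrix.one_mulVec, Matrix.smul_mulVec, hE1]
    ext a; simp
  · have hpE : Matrix.vecMul p E = 0 := by
      have hc : p (Fin.last m) * R = p j.castSucc := by
        rw [hRdef, r]; field_simp
      ext b
      simp [hEdef, Ep, Matrix.vecMul, dotProduct, Matrix.vecMulVec_apply, mul_sub,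
        sub_mul, Finset.sum_sub_distrib, ite_mul, mul_ite, ← hRdef, hc]
    have h2 : Matrix.vecMul p (f • E) = 0 := by
      ext b
      have h3 := congrFun hpE b
      simp only [Matrix.vecMul, dotProduct, Matrix.smul_apply, smul_eq_mul,
        Pi.zero_apply] at h3 ⊢
      have h4 : ∀ a, p a * (f * E a b) = f * (p a * E a b) := fun a => by ring
      simp_rw [h4]
      rw [← Finset.mul_sum, h3, mul_zero]
    rw [hmain, Matrix.vecMul_add, Matrix.vecMul_one, h2, add_zero]
end

section
/- For every ω ∈ ℝ and every i ∈ ℕ, the matrix A^{(p;ω)}_{(𝒥)} satisfies (A^{(p;ω)}_{(𝒥)})^{i+1} = ω^i · A^{(p;ω)}_{(𝒥)}. -/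
open Matrix

/-- For a `d`-element subset `𝒥 = {j_1, …, j_d} ⊆ [n-1]` (given as an injective tuple
`J : Fin d → Fin m`) and a `d × d` matrix `μ`, the `n × n` matrix
`μ^{(p)}_{(𝒥)} := Σ_{u,v} μ_{uv} e^{(p)}_{(j_u, j_v)}`. -/
noncomputable def liftJ (m d : ℕ) (p : Fin (m + 1) → ℝ) (J : Fin d → Fin m)
    (μ : Matrix (Fin d) (Fin d) ℝ) : Matrix (Fin (m + 1)) (Fin (m + 1)) ℝ :=
  ∑ u, ∑ v, μ u v • Ep m p (J u) (J v)

/-- The matrix `A^{(p;ω)}_{(𝒥)} := ω Σ_{u,v} (δ_{j_u j_v} − r_{j_v}/(1 + r_{(𝒥)} 1_d))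
e^{(p)}_{(j_u, j_v)}`. -/
noncomputable def AJ (m d : ℕ) (p : Fin (m + 1) → ℝ) (J : Fin d → Fin m) (ω : ℝ) :
    Matrix (Fin (m + 1)) (Fin (m + 1)) ℝ :=
  ω • ∑ u, ∑ v,
    ((if J u = J v then (1 : ℝ) else 0) - r m p (J v) / (1 + ∑ w, r m p (J w))) •
      Ep m p (J u) (J v)

lemma vmv_mul_s13 {n : ℕ} (u v u' v' : Fin n → ℝ) :
    vecMulVec u v * vecMulVec u' v' = (∑ c, v c * u' c) • vecMulVec u v' := by
  ext a b
  simp only [Matrix.mul_apply, vecMulVec_apply, Matrix.smul_apply, smul_eq_mul,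
    Finset.sum_mul, Finset.mul_sum]
  apply Finset.sum_congr rfl
  intro c _
  ring

lemma Ep_mul (m : ℕ) (p : Fin (m + 1) → ℝ) (j k j' k' : Fin m) :
    Ep m p j k * Ep m p j' k' =
      ((if k = j' then (1 : ℝ) else 0) + r m p j') • Ep m p j k' := by
  unfold Ep
  rw [vmv_mul_s13]
  congr 1
  have hkl : (k.castSucc : Fin (m+1)) ≠ Fin.last m := Fin.ne_last_of_lt (Fin.castSucc_lt_last k)
  have hlj : (Fin.last m : Fin (m+1)) ≠ j'.castSucc :=
    (Fin.ne_last_of_lt (Fin.castSucc_lt_last j')).symm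
  have hcs : ∀ c : Fin (m+1),
      ((if c = k.castSucc then (1:ℝ) else 0) - (if c = Fin.last m then 1 else 0)) *
        ((if c = j'.castSucc then (1:ℝ) else 0) - r m p j' * (if c = Fin.last m then 1 else 0))
      = (if c = k.castSucc then (if c = j'.castSucc then (1:ℝ) else 0) else 0)
        - (if c = k.castSucc then r m p j' * (if c = Fin.last m then 1 else 0) else 0)
        - (if c = Fin.last m then (if c = j'.castSucc then (1:ℝ) else 0) else 0)
        + (if c = Fin.last m then r m p j' * (if c = Fin.last m then 1 else 0) else 0) := by
    intro c
    by_cases h1 : c = k.castSucc <;> by_cases h2 : c = Fin.last m <;>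
      simp [h1, h2, hkl, hlj, Ne.symm hkl, Ne.symm hlj] <;> ring
  rw [Finset.sum_congr rfl (fun c _ => hcs c)]
  simp only [Finset.sum_add_distrib, Finset.sum_sub_distrib, Finset.sum_ite_eq',
    Finset.mem_univ, if_true]
  simp [hkl, hlj, Fin.castSucc_inj]

lemma sum3_comm {M : Type*} [AddCommMonoid M] {n : ℕ} (f : Fin n → Fin n → Fin n → M) :
    ∑ v, ∑ u', ∑ v', f v u' v' = ∑ v', ∑ v, ∑ u', f v u' v' := by
  rw [show (∑ v, ∑ u', ∑ v', f v u' v') = ∑ v, ∑ v', ∑ u', f v u' v' from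
    Finset.sum_congr rfl fun v _ => Finset.sum_comm]
  exact Finset.sum_comm

lemma liftJ_mul (m d : ℕ) (p : Fin (m + 1) → ℝ) (J : Fin d → Fin m)
    (hJ : Function.Injective J) (μ ν : Matrix (Fin d) (Fin d) ℝ) :
    liftJ m d p J μ * liftJ m d p J ν =
      liftJ m d p J (μ * (1 + vecMulVec (fun _ => (1:ℝ)) (fun w => r m p (J w))) * ν) := by
  unfold liftJ
  rw [Finset.sum_mul]
  simp only [Finset.sum_mul, Finset.mul_sum, smul_mul_assoc, Matrix.mul_smul, Ep_mul]
  -- LHS : ∑ u ∑ v ∑ u' ∑ v', μ u v • ν u' v' • (C v u') • Ep (J u) (J v')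
  have hδ : ∀ v u' : Fin d, (if J v = J u' then (1:ℝ) else 0) = if v = u' then 1 else 0 := by
    intro v u'
    simp [hJ.eq_iff]
  -- LHS nesting is (u, u', v', v)
  apply Finset.sum_congr rfl; intro u _
  rw [Finset.sum_comm]
  apply Finset.sum_congr rfl; intro v' _
  simp only [smul_smul, ← Finset.sum_smul]
  congr 1
  simp only [Matrix.mul_apply, Matrix.add_apply, Matrix.one_apply, vecMulVec_apply,
    Finset.sum_mul]
  apply Finset.sum_congr rfl; intro u' _
  apply Finset.sum_congr rfl; intro v _
  rw [hδ]
  ring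

/-- `(A^{(p;ω)}_{(𝒥)})^{i+1} = ω^i · A^{(p;ω)}_{(𝒥)}` for all `i ∈ ℕ`. -/
theorem stmt13 (m d : ℕ) (hm : 1 ≤ m) (hd : 1 ≤ d) (p : Fin (m + 1) → ℝ)
    (hp : ∀ a, 0 < p a) (hsum : ∑ a, p a = 1)
    (J : Fin d → Fin m) (hJ : Function.Injective J) (ω : ℝ) (i : ℕ) :
    (AJ m d p J ω) ^ (i + 1) = ω ^ i • AJ m d p J ω := by
  set s : ℝ := ∑ w, r m p (J w) with hs
  have hspos : 0 ≤ s := Finset.sum_nonneg fun w _ => le_of_lt (div_pos (hp _) (hp _))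
  have hs1 : (1 : ℝ) + s ≠ 0 := by positivity
  set μ : Matrix (Fin d) (Fin d) ℝ :=
    Matrix.of (fun u v => (if J u = J v then (1:ℝ) else 0) - r m p (J v) / (1 + s)) with hμ
  have hA : AJ m d p J ω = ω • liftJ m d p J μ := rfl
  have hμC : μ * (1 + vecMulVec (fun _ => (1:ℝ)) (fun w => r m p (J w))) = 1 := by
    ext u w
    simp only [Matrix.mul_apply, Matrix.add_apply, Matrix.one_apply, vecMulVec_apply, hμ,
      Matrix.of_apply, hJ.eq_iff, one_mul]
    have expand : ∀ v : Fin d,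
        ((if u = v then (1:ℝ) else 0) - r m p (J v) / (1 + s)) *
          ((if v = w then (1:ℝ) else 0) + r m p (J w))
        = (if u = v then (if v = w then (1:ℝ) else 0) else 0)
          + (if u = v then r m p (J w) else 0)
          - (r m p (J v) * (if v = w then (1:ℝ) else 0)) / (1 + s)
          - (r m p (J v) * r m p (J w)) / (1 + s) := by
      intro v
      by_cases h1 : u = v <;> by_cases h2 : v = w <;> subst_vars <;> simp [*] <;> ring
    rw [Finset.sum_congr rfl (fun v _ => expand v)]
    simp only [Finset.sum_add_distrib, Finset.sum_sub_distrib, Finset.sum_ite_eq,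
      Finset.mem_univ, if_true, ← Finset.sum_div, ← Finset.sum_mul, ← hs, mul_ite, mul_one, mul_zero, Finset.sum_ite_eq']
    by_cases h : u = w <;> field_simp [h] <;> ring
  have key : AJ m d p J ω * AJ m d p J ω = ω • AJ m d p J ω := by
    rw [hA, smul_mul_assoc, Matrix.mul_smul, liftJ_mul m d p J hJ, hμC, one_mul]
  induction i with
  | zero => simp
  | succ n ih =>
    rw [pow_succ, ih, smul_mul_assoc, key, pow_succ]
    rw [smul_smul]
end
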